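/- arXiv:2111.02824 — 2 statements merged into one kernel-verified Lean document; each statement's English description precedes it below -/
import Mathlib

section
/- An LFSA S with |Q| states is infinite-step opaque with respect to Q_S if and only if it is K-step opaque with respect to Q_S for some (equivalently any) K > 2^{|Q|} − 2. -/
/-- A labeled finite-state automaton (LFSA): transition relation `δ`,
initial states `Q0`, labeling `lab` (where `none` stands for ε, i.e. unobservable). -/
structure LFSA (Q : Type*) (E : Type*) (A : Type*) where
  δ : Q → E → Q → Prop
  Q0 : Set Q
  lab : E → Option A

namespace LFSA

variable {Q Q1 Q2 E A : Type*}

/-- A run `q →s q'` over a finite event sequence. -/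
inductive Run (S : LFSA Q E A) : Q → List E → Q → Prop
  | nil (q : Q) : Run S q [] q
  | cons {q q' q'' : Q} {e : E} {s : List E} :
      S.δ q e q' → Run S q' s q'' → Run S q (e :: s) q''

/-- Output (label sequence) of an event sequence. -/
def out (S : LFSA Q E A) (s : List E) : List A := s.filterMap S.lab

/-- Generated finite language. -/
def L (S : LFSA Q E A) : Set (List E) := {s | ∃ q0 ∈ S.Q0, ∃ q, S.Run q0 s q}

/-- Current-state estimate after observing `σ`. -/
def M (S : LFSA Q E A) (σ : List A) : Set Q :=
  {q | ∃ q0 ∈ S.Q0, ∃ s : List E, S.out s = σ ∧ S.Run q0 s q}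

/-- Reachability via a nonempty event sequence. -/
def ReachPlus (S : LFSA Q E A) (q q' : Q) : Prop := ∃ s : List E, s ≠ [] ∧ S.Run q s q'

/-- There is a transition cycle reachable from `q` (a cycle at `q` itself counts). -/
def CycleReachableFrom (S : LFSA Q E A) (q : Q) : Prop :=
  ∃ p : Q, (p = q ∨ S.ReachPlus q p) ∧ ∃ s : List E, s ≠ [] ∧ S.Run p s p

/-- `*`-strong detectability. -/
def StarSD (S : LFSA Q E A) : Prop :=
  ∃ k : ℕ, 0 < k ∧ ∀ s ∈ S.L, ∀ σ : List A, σ <+: S.out s → k < σ.length →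
    ∃ q : Q, S.M σ = {q}

/-- ω-strong detectability. -/
def OmegaSD (S : LFSA Q E A) : Prop :=
  ∃ k : ℕ, 0 < k ∧ ∀ (s : ℕ → E) (ρ : ℕ → Q), ρ 0 ∈ S.Q0 →
    (∀ n : ℕ, S.δ (ρ n) (s n) (ρ (n + 1))) →
    ∀ (n : ℕ) (σ : List A), σ <+: S.out (List.ofFn (fun i : Fin n => s i)) →
      k < σ.length → ∃ q : Q, S.M σ = {q}

/-- Concurrent composition: observable transitions with equal labels synchronize,
unobservable transitions interleave. Events are pairs over `Option E` (`none` = ε). -/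
def CC (S1 : LFSA Q1 E A) (S2 : LFSA Q2 E A) :
    LFSA (Q1 × Q2) (Option E × Option E) A where
  δ p ev p' :=
    match ev with
    | (some e, some e') =>
        (∃ a : A, S1.lab e = some a ∧ S2.lab e' = some a) ∧
          S1.δ p.1 e p'.1 ∧ S2.δ p.2 e' p'.2
    | (some e, none) => S1.lab e = none ∧ S1.δ p.1 e p'.1 ∧ p.2 = p'.2
    | (none, some e') => S2.lab e' = none ∧ p.1 = p'.1 ∧ S2.δ p.2 e' p'.2
    | (none, none) => False
  Q0 := {p | p.1 ∈ S1.Q0 ∧ p.2 ∈ S2.Q0}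
  lab ev := ev.1.bind S1.lab

/-- Left projection of an event sequence of a concurrent composition. -/
def lproj (s : List (Option E × Option E)) : List E := s.filterMap Prod.fst

/-- Right projection of an event sequence of a concurrent composition. -/
def rproj (s : List (Option E × Option E)) : List E := s.filterMap Prod.snd

/-- Unobservable reach of a set of states. -/
def UR (S : LFSA Q E A) (X : Set Q) : Set Q :=
  {q | ∃ q0 ∈ X, ∃ s : List E, S.out s = [] ∧ S.Run q0 s q}

/-- One step of the observer (powerset construction). -/
def obsStep (S : LFSA Q E A) (x : Set Q) (a : A) : Set Q :=
  {q' | ∃ q ∈ x, ∃ (e : E) (p : Q), S.lab e = some a ∧ S.δ q e p ∧ q' ∈ S.UR {p}}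

/-- Observer run (deterministic). -/
def obsRun (S : LFSA Q E A) (x : Set Q) (σ : List A) : Set Q := σ.foldl S.obsStep x

/-- The concurrent composition `CC(S_ε, Obs^ε)` of `S` (with events relabeled by their
labels) and a deterministic observer with step function `ostep` and initial state `x0`:
observable transitions move both components, unobservable ones move only the left one. -/
def CCObs (S : LFSA Q E A) (ostep : Set Q → A → Set Q) (x0 : Set Q) :
    LFSA (Q × Set Q) E A where
  δ p e p' := S.δ p.1 e p'.1 ∧
    (∀ a : A, S.lab e = some a → p'.2 = ostep p.2 a) ∧
    (S.lab e = none → p'.2 = p.2)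
  Q0 := {p | p.1 ∈ S.Q0 ∧ p.2 = x0}
  lab := S.lab

/-- A state is reachable if it is an initial state or reachable from one. -/
def Reachable (S : LFSA Q E A) (q : Q) : Prop := ∃ q0 ∈ S.Q0, ∃ s : List E, S.Run q0 s q

/-- Restriction of an automaton to a set of allowed states. -/
def restrict (S : LFSA Q E A) (P : Set Q) : LFSA Q E A where
  δ q e q' := S.δ q e q' ∧ q ∈ P ∧ q' ∈ P
  Q0 := S.Q0 ∩ P
  lab := S.lab

/-- A run all of whose states (including endpoints) lie in `P`. -/
inductive RunIn (S : LFSA Q E A) (P : Set Q) : Q → List E → Q → Prop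
  | nil (q : Q) : q ∈ P → RunIn S P q [] q
  | cons {q q' q'' : Q} {e : E} {s : List E} :
      q ∈ P → S.δ q e q' → RunIn S P q' s q'' → RunIn S P q (e :: s) q''

/-- Normal subautomaton: all faulty transitions removed. -/
def Sn (S : LFSA Q E A) (Ef : Set E) : LFSA Q E A where
  δ q e q' := S.δ q e q' ∧ e ∉ Ef
  Q0 := S.Q0
  lab := S.lab

/-- Faulty subautomaton: faulty transitions together with all their
predecessor and successor transitions. -/
def Sf (S : LFSA Q E A) (Ef : Set E) : LFSA Q E A where
  δ q e q' := S.δ q e q' ∧ ∃ c f d, f ∈ Ef ∧ S.δ c f d ∧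
      ((q = c ∧ e = f ∧ q' = d) ∨ (c = q' ∨ S.ReachPlus q' c) ∨ (q = d ∨ S.ReachPlus d q))
  Q0 := S.Q0
  lab := S.lab

/-- `s` ends with a faulty event. -/
def EndsFaulty (Ef : Set E) (s : List E) : Prop := ∃ (t : List E) (e : E), e ∈ Ef ∧ s = t ++ [e]

/-- `E_f`-diagnosability. -/
def Diag (S : LFSA Q E A) (Ef : Set E) : Prop :=
  ∃ k : ℕ, ∀ s ∈ S.L, EndsFaulty Ef s → ∀ s' : List E, s ++ s' ∈ S.L → k < s'.length →
    ∀ s'' ∈ S.L, S.out s'' = S.out (s ++ s') → ∃ e ∈ Ef, e ∈ s''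

/-- `E_f`-predictability. -/
def Pred (S : LFSA Q E A) (Ef : Set E) : Prop :=
  ∃ k : ℕ, ∀ s ∈ S.L, EndsFaulty Ef s →
    ∃ s' : List E, s' <+: s ∧ (∀ e ∈ s', e ∉ Ef) ∧
      ∀ u v : List E, u ++ v ∈ S.L → S.out s' = S.out u → (∀ e ∈ u, e ∉ Ef) →
        k < v.length → ∃ e ∈ Ef, e ∈ v

/-- Current-state opacity. -/
def CSO (S : LFSA Q E A) (QS : Set Q) : Prop :=
  ∀ q0 ∈ S.Q0, ∀ (s : List E) (q : Q), S.Run q0 s q → q ∈ QS →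
    ∃ q0' ∈ S.Q0, ∃ (s' : List E) (q' : Q), S.Run q0' s' q' ∧ q' ∉ QS ∧ S.out s = S.out s'

/-- Initial-state opacity. -/
def ISO (S : LFSA Q E A) (QS : Set Q) : Prop :=
  ∀ q0 ∈ S.Q0 ∩ QS, ∀ (s : List E) (q : Q), S.Run q0 s q →
    ∃ q0' ∈ S.Q0 \ QS, ∃ (s' : List E) (q' : Q), S.Run q0' s' q' ∧ S.out s = S.out s'

/-- Infinite-step opacity. -/
def InfSO (S : LFSA Q E A) (QS : Set Q) : Prop :=
  ∀ q0 ∈ S.Q0, ∀ (s1 : List E) (q1 : Q) (s2 : List E) (q2 : Q),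
    S.Run q0 s1 q1 → S.Run q1 s2 q2 → q1 ∈ QS →
    ∃ q0' ∈ S.Q0, ∃ (s1' : List E) (q1' : Q) (s2' : List E) (q2' : Q),
      S.Run q0' s1' q1' ∧ S.Run q1' s2' q2' ∧ q1' ∉ QS ∧
        S.out s1 = S.out s1' ∧ S.out s2 = S.out s2'

/-- `K`-step opacity. -/
def KSO (S : LFSA Q E A) (QS : Set Q) (K : ℕ) : Prop :=
  ∀ q0 ∈ S.Q0, ∀ (s1 : List E) (q1 : Q) (s2 : List E) (q2 : Q),
    S.Run q0 s1 q1 → S.Run q1 s2 q2 → q1 ∈ QS → (S.out s2).length ≤ K →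
    ∃ q0' ∈ S.Q0, ∃ (s1' : List E) (q1' : Q) (s2' : List E) (q2' : Q),
      S.Run q0' s1' q1' ∧ S.Run q1' s2' q2' ∧ q1' ∉ QS ∧
        S.out s1 = S.out s1' ∧ S.out s2 = S.out s2'

/-- Strong current-state opacity: the matching run is entirely non-secret. -/
def SCSO (S : LFSA Q E A) (QS : Set Q) : Prop :=
  ∀ q0 ∈ S.Q0, ∀ (s : List E) (q : Q), S.Run q0 s q → q ∈ QS →
    ∃ q0' ∈ S.Q0, ∃ (s' : List E) (q' : Q), S.RunIn QSᶜ q0' s' q' ∧ S.out s = S.out s'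

/-- Strong initial-state opacity. -/
def SISO (S : LFSA Q E A) (QS : Set Q) : Prop :=
  ∀ q0 ∈ S.Q0 ∩ QS, ∀ (s : List E) (q : Q), S.Run q0 s q →
    ∃ q0' ∈ S.Q0 \ QS, ∃ (s' : List E) (q' : Q), S.RunIn QSᶜ q0' s' q' ∧ S.out s = S.out s'

/-- Strong infinite-step opacity. -/
def SInfSO (S : LFSA Q E A) (QS : Set Q) : Prop :=
  ∀ q0 ∈ S.Q0, ∀ (s1 : List E) (q1 : Q) (s2 : List E) (q2 : Q),
    S.Run q0 s1 q1 → S.Run q1 s2 q2 → q1 ∈ QS →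
    ∃ q0' ∈ S.Q0, ∃ (s1' : List E) (q1' : Q) (s2' : List E) (q2' : Q),
      S.RunIn QSᶜ q0' s1' q1' ∧ S.RunIn QSᶜ q1' s2' q2' ∧
        S.out s1 = S.out s1' ∧ S.out s2 = S.out s2'

/-- Strong `K`-step opacity. -/
def SKSO (S : LFSA Q E A) (QS : Set Q) (K : ℕ) : Prop :=
  ∀ q0 ∈ S.Q0, ∀ (s1 : List E) (q1 : Q) (s2 : List E) (q2 : Q),
    S.Run q0 s1 q1 → S.Run q1 s2 q2 → q1 ∈ QS → (S.out s2).length ≤ K →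
    ∃ q0' ∈ S.Q0, ∃ (s1' : List E) (q1' : Q) (s2' : List E) (q2' : Q),
      S.RunIn QSᶜ q0' s1' q1' ∧ S.RunIn QSᶜ q1' s2' q2' ∧
        S.out s1 = S.out s1' ∧ S.out s2 = S.out s2'

/-- Observer step of the secret-deleted subautomaton `S_dss`. -/
def dssObsStep (S : LFSA Q E A) (QS : Set Q) : Set Q → A → Set Q :=
  (S.restrict QSᶜ).obsStep

/-- Initial observer state of the secret-deleted subautomaton. -/
def dssInit (S : LFSA Q E A) (QS : Set Q) : Set Q :=
  (S.restrict QSᶜ).UR (S.restrict QSᶜ).Q0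

end LFSA

section Aux
namespace LFSA

variable {Q E A : Type*}

lemma run_append' {S : LFSA Q E A} {q p r : Q} {s t : List E}
    (h1 : S.Run q s p) (h2 : S.Run p t r) : S.Run q (s ++ t) r := by
  induction h1 with
  | nil q => exact h2
  | cons h _ ih => exact .cons h (ih h2)

lemma out_append' (S : LFSA Q E A) (s t : List E) :
    S.out (s ++ t) = S.out s ++ S.out t := List.filterMap_append ..

lemma run_split' {S : LFSA Q E A} {q r : Q} {s : List E} {γ1 γ2 : List A}
    (h : S.Run q s r) (ho : S.out s = γ1 ++ γ2) :
    ∃ s1 s2 p, S.Run q s1 p ∧ S.Run p s2 r ∧ S.out s1 = γ1 ∧ S.out s2 = γ2 := by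
  induction h generalizing γ1 γ2 with
  | nil q =>
    have h1 : γ1 = [] ∧ γ2 = [] := by
      have : ([] : List A) = γ1 ++ γ2 := ho
      constructor <;> [exact (List.append_eq_nil_iff.mp this.symm).1;
        exact (List.append_eq_nil_iff.mp this.symm).2]
    exact ⟨[], [], q, .nil q, .nil q, by simp [out, h1.1], by simp [out, h1.2]⟩
  | @cons q q' q'' e s hδ hrun ih =>
    rcases hl : S.lab e with _ | a
    · have ho' : S.out s = γ1 ++ γ2 := by
        have : S.out (e :: s) = S.out s := by simp [out, hl]
        rw [← this, ho]
      obtain ⟨s1, s2, p, h1, h2, e1, e2⟩ := ih ho'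
      exact ⟨e :: s1, s2, p, .cons hδ h1, h2, by simp [out, hl] at e1 ⊢; exact e1, e2⟩
    · have hoc : a :: S.out s = γ1 ++ γ2 := by
        have : S.out (e :: s) = a :: S.out s := by simp [out, hl]
        rw [← this, ho]
      cases γ1 with
      | nil =>
        exact ⟨[], e :: s, q, .nil q, .cons hδ hrun, rfl, by simp at hoc; simpa [out, hl] using hoc⟩
      | cons b γ1' =>
        simp at hoc
        obtain ⟨hb, ho'⟩ := hoc
        obtain ⟨s1, s2, p, h1, h2, e1, e2⟩ := ih ho'
        exact ⟨e :: s1, s2, p, .cons hδ h1, h2, by simp [out, hl] at e1 ⊢; exact ⟨hb, e1⟩, e2⟩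

/-- States that can generate observation `β` (via some run to somewhere). -/
def Bset (S : LFSA Q E A) (β : List A) : Set Q :=
  {q | ∃ s q', S.Run q s q' ∧ S.out s = β}

lemma mem_Bset_append {S : LFSA Q E A} {q : Q} {γ δ : List A} :
    q ∈ S.Bset (γ ++ δ) ↔ ∃ m, (∃ s, S.Run q s m ∧ S.out s = γ) ∧ m ∈ S.Bset δ := by
  constructor
  · rintro ⟨s, q', hr, ho⟩
    obtain ⟨s1, s2, p, h1, h2, e1, e2⟩ := run_split' hr ho
    exact ⟨p, ⟨s1, h1, e1⟩, s2, q', h2, e2⟩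
  · rintro ⟨m, ⟨s, hr, ho⟩, t, q', hr', ho'⟩
    exact ⟨s ++ t, q', run_append' hr hr', by rw [out_append', ho, ho']⟩

lemma Bset_congr {S : LFSA Q E A} {δ1 δ2 : List A} (h : S.Bset δ1 = S.Bset δ2)
    (γ : List A) : S.Bset (γ ++ δ1) = S.Bset (γ ++ δ2) := by
  ext q
  rw [mem_Bset_append, mem_Bset_append]
  constructor <;> rintro ⟨m, hm, hmem⟩
  · exact ⟨m, hm, h ▸ hmem⟩
  · exact ⟨m, hm, h.symm ▸ hmem⟩

lemma Bset_drop_nonempty {S : LFSA Q E A} {β : List A} (h : (S.Bset β).Nonempty)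
    (i : ℕ) : (S.Bset (β.drop i)).Nonempty := by
  obtain ⟨q, hq⟩ := h
  rw [← List.take_append_drop i β] at hq
  obtain ⟨m, _, hmem⟩ := mem_Bset_append.mp hq
  exact ⟨m, hmem⟩

lemma pumping [Fintype Q] (S : LFSA Q E A) :
    ∀ n (β : List A), β.length = n → (S.Bset β).Nonempty →
      ∃ β' : List A, β'.length ≤ 2 ^ Fintype.card Q - 2 ∧ S.Bset β' = S.Bset β := by
  intro n
  induction n using Nat.strong_induction_on with
  | _ n ih =>
  intro β hlen hne
  by_cases hsmall : β.length ≤ 2 ^ Fintype.card Q - 2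
  · exact ⟨β, hsmall, rfl⟩
  · push_neg at hsmall
    set L := β.length with hL
    have hcard : Fintype.card (Set Q) < L + 2 := by
      rw [Fintype.card_set]; omega
    have hcard' : Fintype.card (Set Q) < Fintype.card (Fin (L + 2)) := by
      simpa using hcard
    set f : Fin (L + 2) → Set Q :=
      fun i => if (i : ℕ) = L + 1 then (∅ : Set Q) else S.Bset (β.drop i) with hf
    obtain ⟨a, b, hab, heq⟩ := Fintype.exists_ne_map_eq_of_card_lt f hcard'
    -- wlog (a : ℕ) < (b : ℕ)
    have key : ∀ a b : Fin (L + 2), (a : ℕ) < (b : ℕ) → f a = f b →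
        ∃ β' : List A, β'.length < L ∧ S.Bset β' = S.Bset β := by
      intro a b hlt hfeq
      have ha : (a : ℕ) ≠ L + 1 := by omega
      rcases eq_or_ne (b : ℕ) (L + 1) with hb | hb
      · exfalso
        have : f a = ∅ := by rw [hfeq, hf]; simp [hb]
        have hne' := Bset_drop_nonempty hne (a : ℕ)
        rw [hf] at this; simp [ha] at this
        rw [this] at hne'
        exact Set.not_nonempty_empty hne'
      · have hbL : (b : ℕ) ≤ L := by omega
        have hBeq : S.Bset (β.drop (a : ℕ)) = S.Bset (β.drop (b : ℕ)) := by
          have := hfeq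
          rw [hf] at this; simpa [ha, hb] using this
        refine ⟨β.take (a : ℕ) ++ β.drop (b : ℕ), ?_, ?_⟩
        · have h1 : (β.take (a : ℕ)).length = (a : ℕ) := by
            rw [List.length_take]; omega
          have h2 : (β.drop (b : ℕ)).length = L - (b : ℕ) := by
            rw [List.length_drop]
          rw [List.length_append, h1, h2]; omega
        · calc S.Bset (β.take (a : ℕ) ++ β.drop (b : ℕ))
              = S.Bset (β.take (a : ℕ) ++ β.drop (a : ℕ)) :=
                Bset_congr hBeq.symm _
            _ = S.Bset β := by rw [List.take_append_drop]
    have hres : ∃ β' : List A, β'.length < L ∧ S.Bset β' = S.Bset β := by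
      rcases lt_or_gt_of_ne (fun h : (a : ℕ) = (b : ℕ) => hab (Fin.ext h)) with h | h
      · exact key a b h heq
      · exact key b a h heq.symm
    obtain ⟨β', hlt, hBeq⟩ := hres
    obtain ⟨β'', hle, hBeq'⟩ := ih β'.length (by omega) β' rfl (hBeq ▸ hne)
    exact ⟨β'', hle, hBeq'.trans hBeq⟩

lemma kso_to_infso [Fintype Q] {S : LFSA Q E A} {QS : Set Q} {K : ℕ}
    (hK : 2 ^ Fintype.card Q - 2 < K) (h : S.KSO QS K) : S.InfSO QS := by
  intro q0 hq0 s1 q1 s2 q2 hr1 hr2 hq1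
  have hmem : q1 ∈ S.Bset (S.out s2) := ⟨s2, q2, hr2, rfl⟩
  obtain ⟨β', hlen, hBeq⟩ := pumping S (S.out s2).length (S.out s2) rfl ⟨q1, hmem⟩
  have hq1b : q1 ∈ S.Bset β' := hBeq ▸ hmem
  obtain ⟨t, p, hrt, hot⟩ := hq1b
  obtain ⟨q0', hq0', s1', q1', t', p', hr1', hr2', hns, ho1, ho2⟩ :=
    h q0 hq0 s1 q1 t p hr1 hrt hq1 (by rw [hot]; omega)
  have : q1' ∈ S.Bset (S.out s2) := by
    rw [← hBeq]
    exact ⟨t', p', hr2', by rw [← ho2, hot]⟩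
  obtain ⟨u, r, hru, hou⟩ := this
  exact ⟨q0', hq0', s1', q1', u, r, hr1', hru, hns, ho1, hou.symm⟩

lemma infso_to_kso {S : LFSA Q E A} {QS : Set Q} (h : S.InfSO QS) (K : ℕ) :
    S.KSO QS K := by
  intro q0 hq0 s1 q1 s2 q2 hr1 hr2 hq1 _
  exact h q0 hq0 s1 q1 s2 q2 hr1 hr2 hq1

end LFSA
end Aux

/-- infinite-step opacity coincides with `K`-step opacity for
some (equivalently any) `K > 2^{|Q|} - 2`. -/
theorem stmt12 {Q E A : Type*} [Fintype Q] (S : LFSA Q E A) (QS : Set Q) :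
    (S.InfSO QS ↔ ∃ K : ℕ, 2 ^ Fintype.card Q - 2 < K ∧ S.KSO QS K) ∧
    (S.InfSO QS ↔ ∀ K : ℕ, 2 ^ Fintype.card Q - 2 < K → S.KSO QS K) := by
  constructor
  · constructor
    · intro h
      exact ⟨2 ^ Fintype.card Q - 2 + 1, by omega, LFSA.infso_to_kso h _⟩
    · rintro ⟨K, hK, hkso⟩
      exact LFSA.kso_to_infso hK hkso
  · constructor
    · intro h K hK
      exact LFSA.infso_to_kso h K
    · intro h
      exact LFSA.kso_to_infso (K := 2 ^ Fintype.card Q - 2 + 1) (by omega) (h _ (by omega))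
end

section
/- For an LFSA S, the following are equivalent: (i) for every state (q,x) reachable in CC(S_ε, S_dss_obs^ε), if q ∈ Q_S then x ≠ ∅ and all states reachable from (q,x) have nonempty right component; (ii) every state (q'',x'') reachable in CC(S_ε, S_dss_obs^ε) satisfies x'' ≠ ∅. Consequently, S is strongly infinite-step opaque with respect to Q_S if and only if every reachable state of CC(S_ε, S_dss_obs^ε) has nonempty right component. -/
namespace LFSA

variable {Q E A : Type*}

lemma Run.append' {S : LFSA Q E A} {q q' q'' : Q} {s t : List E}
    (h : S.Run q s q') (h' : S.Run q' t q'') : S.Run q (s ++ t) q'' := by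
  induction h with
  | nil q => simpa using h'
  | cons hδ _ ih => exact .cons hδ (ih h')

lemma out_nil' (S : LFSA Q E A) : S.out ([] : List E) = [] := rfl

lemma out_cons_none' {S : LFSA Q E A} {e : E} (s : List E) (he : S.lab e = none) :
    S.out (e :: s) = S.out s := by
  simp [out, List.filterMap_cons, he]

lemma out_cons_some' {S : LFSA Q E A} {e : E} {a : A} (s : List E) (he : S.lab e = some a) :
    S.out (e :: s) = a :: S.out s := by
  simp [out, List.filterMap_cons, he]

lemma restrict_out' (S : LFSA Q E A) (P : Set Q) (s : List E) :
    (S.restrict P).out s = S.out s := rfl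

lemma RunIn.head_mem' {S : LFSA Q E A} {P : Set Q} {q q' : Q} {s : List E}
    (h : S.RunIn P q s q') : q ∈ P := by
  cases h <;> assumption

lemma RunIn.append' {S : LFSA Q E A} {P : Set Q} {q q' q'' : Q} {s t : List E}
    (h : S.RunIn P q s q') (h' : S.RunIn P q' t q'') : S.RunIn P q (s ++ t) q'' := by
  induction h with
  | nil q hq => simpa using h'
  | cons hq hδ _ ih => exact .cons hq hδ (ih h')

lemma run_restrict_to_runIn' {S : LFSA Q E A} {P : Set Q} {q q' : Q} {s : List E}
    (h : (S.restrict P).Run q s q') : q ∈ P → S.RunIn P q s q' := by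
  induction h with
  | nil q => exact fun hq => .nil q hq
  | cons hδ _ ih => exact fun hq => .cons hq hδ.1 (ih hδ.2.2)

lemma RunIn.restrict_run' {S : LFSA Q E A} {P : Set Q} {q q' : Q} {s : List E}
    (h : S.RunIn P q s q') : (S.restrict P).Run q s q' := by
  induction h with
  | nil q _ => exact .nil q
  | cons hq hδ h ih => exact .cons ⟨hδ, hq, h.head_mem'⟩ ih

lemma UR_UR' (S : LFSA Q E A) (x : Set Q) : S.UR (S.UR x) ⊆ S.UR x := by
  rintro q ⟨q1, ⟨q0, hq0, s, hs, hr⟩, t, ht, hr'⟩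
  exact ⟨q0, hq0, s ++ t, by rw [out_append', hs, ht, List.append_nil], hr.append' hr'⟩

lemma UR_obsStep' (S : LFSA Q E A) (x : Set Q) (a : A) :
    S.UR (S.obsStep x a) ⊆ S.obsStep x a := by
  rintro q ⟨q1, ⟨q0, hq0, e, p, he, hδ, hUR⟩, t, ht, hr⟩
  exact ⟨q0, hq0, e, p, he, hδ, S.UR_UR' _ ⟨q1, hUR, t, ht, hr⟩⟩

lemma run_split_out' {S : LFSA Q E A} {q1 q : Q} {s : List E} (h : S.Run q1 s q) :
    ∀ {a : A} {σ : List A}, S.out s = a :: σ →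
      ∃ (u : List E) (e : E) (v : List E) (m p : Q), s = u ++ e :: v ∧ S.out u = [] ∧
        S.lab e = some a ∧ S.out v = σ ∧ S.Run q1 u m ∧ S.δ m e p ∧ S.Run p v q := by
  induction h with
  | nil q => intro a σ h; simp [out] at h
  | @cons q q' q'' e s hδ hr ih =>
    intro a σ hout
    cases he : S.lab e with
    | none =>
      rw [out_cons_none' s he] at hout
      obtain ⟨u, e', v, m, p, rfl, hu, he', hv, h1, h2, h3⟩ := ih hout
      exact ⟨e :: u, e', v, m, p, rfl, by rw [out_cons_none' _ he, hu], he', hv,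
        .cons hδ h1, h2, h3⟩
    | some a' =>
      rw [out_cons_some' s he] at hout
      obtain ⟨rfl, hs⟩ : a' = a ∧ S.out s = σ := by
        exact ⟨List.head_eq_of_cons_eq hout, List.tail_eq_of_cons_eq hout⟩
      exact ⟨[], e, s, q, q', rfl, rfl, he, hs, .nil q, hδ, hr⟩

lemma mem_obsRun' {S : LFSA Q E A} (σ : List A) :
    ∀ (x : Set Q), S.UR x ⊆ x → ∀ q : Q,
      (q ∈ S.obsRun x σ ↔ ∃ q1 ∈ x, ∃ s : List E, S.out s = σ ∧ S.Run q1 s q) := by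
  induction σ with
  | nil =>
    intro x hx q
    constructor
    · exact fun hq => ⟨q, hq, [], rfl, .nil q⟩
    · rintro ⟨q1, hq1, s, hs, hr⟩
      exact hx ⟨q1, hq1, s, hs, hr⟩
  | cons a σ ih =>
    intro x hx q
    have hstep : q ∈ S.obsRun x (a :: σ) ↔ q ∈ S.obsRun (S.obsStep x a) σ := Iff.rfl
    rw [hstep, ih (S.obsStep x a) (S.UR_obsStep' x a) q]
    constructor
    · rintro ⟨q1, ⟨q0, hq0, e, p, he, hδ, p', hp', u, hu, hru⟩, s, hs, hrs⟩
      rcases hp' with rfl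
      refine ⟨q0, hq0, e :: (u ++ s), ?_, .cons hδ (hru.append' hrs)⟩
      rw [out_cons_some' _ he, out_append', hu, hs]; rfl
    · rintro ⟨q1, hq1, s, hs, hrs⟩
      obtain ⟨u, e, v, m, p, rfl, hu, he, hv, h1, h2, h3⟩ := run_split_out' hrs hs
      have hm : m ∈ x := hx ⟨q1, hq1, u, hu, h1⟩
      exact ⟨p, ⟨m, hm, e, p, he, h2, p, rfl, [], rfl, .nil p⟩, v, hv, h3⟩

lemma RunIn.split' {S : LFSA Q E A} {P : Set Q} {q q'' : Q} {s : List E}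
    (h : S.RunIn P q s q'') :
    ∀ (σ1 σ2 : List A), S.out s = σ1 ++ σ2 →
      ∃ (u v : List E) (m : Q), s = u ++ v ∧ S.RunIn P q u m ∧ S.RunIn P m v q'' ∧
        S.out u = σ1 ∧ S.out v = σ2 := by
  induction h with
  | nil q hq =>
    intro σ1 σ2 hout
    obtain ⟨rfl, rfl⟩ : σ1 = [] ∧ σ2 = [] := by
      have : σ1 ++ σ2 = [] := hout.symm
      exact List.append_eq_nil_iff.mp this
    exact ⟨[], [], q, rfl, .nil q hq, .nil q hq, rfl, rfl⟩
  | @cons q q' q''' e s hq hδ hr ih =>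
    intro σ1 σ2 hout
    cases σ1 with
    | nil => exact ⟨[], e :: s, q, rfl, .nil q hq, .cons hq hδ hr, rfl, by simpa using hout⟩
    | cons a σ1 =>
      cases he : S.lab e with
      | none =>
        rw [out_cons_none' s he] at hout
        obtain ⟨u, v, m, rfl, h1, h2, h3, h4⟩ := ih (a :: σ1) σ2 hout
        exact ⟨e :: u, v, m, rfl, .cons hq hδ h1, h2, by rw [out_cons_none' _ he, h3], h4⟩
      | some a' =>
        rw [out_cons_some' s he] at hout
        obtain ⟨rfl, hs⟩ : a' = a ∧ S.out s = σ1 ++ σ2 :=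
          ⟨List.head_eq_of_cons_eq hout, List.tail_eq_of_cons_eq hout⟩
        obtain ⟨u, v, m, rfl, h1, h2, h3, h4⟩ := ih σ1 σ2 hs
        exact ⟨e :: u, v, m, rfl, .cons hq hδ h1, h2, by rw [out_cons_some' _ he, h3], h4⟩

lemma run_secret_cases' {S : LFSA Q E A} {QS : Set Q} {q0 q : Q} {s : List E}
    (h : S.Run q0 s q) :
    S.RunIn QSᶜ q0 s q ∨
      ∃ (s1 : List E) (q1 : Q) (s2 : List E), s = s1 ++ s2 ∧ q1 ∈ QS ∧
        S.Run q0 s1 q1 ∧ S.Run q1 s2 q := by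
  induction h with
  | nil q =>
    by_cases hq : q ∈ QS
    · exact Or.inr ⟨[], q, [], rfl, hq, .nil q, .nil q⟩
    · exact Or.inl (.nil q hq)
  | @cons q q' q'' e s hδ hr ih =>
    by_cases hq : q ∈ QS
    · exact Or.inr ⟨[], q, e :: s, rfl, hq, .nil q, .cons hδ hr⟩
    · rcases ih with h | ⟨s1, q1, s2, rfl, hq1, h1, h2⟩
      · exact Or.inl (.cons hq hδ h)
      · exact Or.inr ⟨e :: s1, q1, s2, rfl, hq1, .cons hδ h1, h2⟩

lemma ccobs_run_of' {S : LFSA Q E A} {ostep : Set Q → A → Set Q} {x0 : Set Q} {q q' : Q}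
    {s : List E} (h : S.Run q s q') :
    ∀ x : Set Q, (S.CCObs ostep x0).Run (q, x) s (q', (S.out s).foldl ostep x) := by
  induction h with
  | nil q => intro x; exact .nil (q, x)
  | @cons q q' q'' e s hδ hr ih =>
    intro x
    cases he : S.lab e with
    | none =>
      have hstep : (S.CCObs ostep x0).δ (q, x) e (q', x) := by
        refine ⟨hδ, ?_, ?_⟩
        · intro a ha; rw [he] at ha; cases ha
        · intro _; rfl
      rw [out_cons_none' s he]
      exact .cons hstep (ih x)
    | some a =>
      have hstep : (S.CCObs ostep x0).δ (q, x) e (q', ostep x a) := by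
        refine ⟨hδ, ?_, ?_⟩
        · intro a' ha'; rw [he] at ha'; cases ha'; rfl
        · intro hn; rw [he] at hn; cases hn
      rw [out_cons_some' s he, List.foldl_cons]
      exact .cons hstep (ih (ostep x a))

lemma ccobs_run_inv' {S : LFSA Q E A} {ostep : Set Q → A → Set Q} {x0 : Set Q}
    {p p' : Q × Set Q} {s : List E} (h : (S.CCObs ostep x0).Run p s p') :
    S.Run p.1 s p'.1 ∧ p'.2 = (S.out s).foldl ostep p.2 := by
  induction h with
  | nil q => exact ⟨.nil _, rfl⟩
  | @cons p p' p'' e s hδ hr ih =>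
    obtain ⟨h1, h2⟩ := ih
    obtain ⟨hδ1, hsome, hnone⟩ := hδ
    cases he : S.lab e with
    | none => exact ⟨.cons hδ1 h1, by rw [out_cons_none' s he, h2, hnone he]⟩
    | some a =>
      exact ⟨.cons hδ1 h1, by rw [out_cons_some' s he, List.foldl_cons, h2, hsome a he]⟩

lemma Reachable.run' {S : LFSA Q E A} {p p' : Q} {s : List E}
    (h : S.Reachable p) (hr : S.Run p s p') : S.Reachable p' := by
  obtain ⟨q0, hq0, t, ht⟩ := h
  exact ⟨q0, hq0, t ++ s, ht.append' hr⟩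

lemma mem_est' {S : LFSA Q E A} {QS : Set Q} {σ : List A} {q : Q} :
    q ∈ (S.restrict QSᶜ).obsRun (S.dssInit QS) σ ↔
      ∃ q0 ∈ S.Q0, q0 ∉ QS ∧ ∃ s : List E, S.RunIn QSᶜ q0 s q ∧ S.out s = σ := by
  have hx0 : (S.restrict QSᶜ).UR (S.dssInit QS) ⊆ S.dssInit QS := UR_UR' _ _
  rw [mem_obsRun' σ _ hx0 q]
  constructor
  · rintro ⟨q1, ⟨q0, hq0, u, hu, hru⟩, s, hs, hrs⟩
    refine ⟨q0, hq0.1, hq0.2, u ++ s, run_restrict_to_runIn' (hru.append' hrs) hq0.2, ?_⟩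
    have : (S.restrict QSᶜ).out (u ++ s) = σ := by rw [out_append', hu, hs]; rfl
    exact this
  · rintro ⟨q0, hq0, hq0c, s, hrun, hout⟩
    exact ⟨q0, ⟨q0, ⟨hq0, hq0c⟩, [], rfl, .nil q0⟩, s, hout, hrun.restrict_run'⟩

end LFSA

/-- the two conditions (i) and (ii) are equivalent, and strong
infinite-step opacity is characterized by all reachable states of
`CC(S_ε, S_dss_obs^ε)` having nonempty right component. -/
theorem stmt16 {Q E A : Type*} (S : LFSA Q E A) (QS : Set Q)
    (T : LFSA (Q × Set Q) E A)
    (hT : T = S.CCObs (S.dssObsStep QS) (S.dssInit QS)) :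
    ((∀ p : Q × Set Q, T.Reachable p → p.1 ∈ QS →
        (p.2.Nonempty ∧ ∀ (s : List E) (p' : Q × Set Q), T.Run p s p' → p'.2.Nonempty)) ↔
      (∀ p : Q × Set Q, T.Reachable p → p.2.Nonempty)) ∧
    (S.SInfSO QS ↔ ∀ p : Q × Set Q, T.Reachable p → p.2.Nonempty) := by
  subst hT
  have hreach : ∀ p : Q × Set Q,
      (S.CCObs (S.dssObsStep QS) (S.dssInit QS)).Reachable p ↔
        ∃ q0 ∈ S.Q0, ∃ s : List E, S.Run q0 s p.1 ∧
          p.2 = (S.restrict QSᶜ).obsRun (S.dssInit QS) (S.out s) := by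
    intro p
    constructor
    · rintro ⟨p0, ⟨h01, h02⟩, s, hrun⟩
      obtain ⟨h1, h2⟩ := LFSA.ccobs_run_inv' hrun
      exact ⟨p0.1, h01, s, h1, by rw [h2, h02]; rfl⟩
    · rintro ⟨q0, hq0, s, hrun, hx⟩
      obtain ⟨q, x⟩ := p
      simp only at hrun hx
      subst hx
      exact ⟨(q0, S.dssInit QS), ⟨hq0, rfl⟩, s, LFSA.ccobs_run_of' hrun (S.dssInit QS)⟩
  have hsplit : ∀ σ1 σ2 : List A,
      (S.restrict QSᶜ).obsRun (S.dssInit QS) (σ1 ++ σ2) =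
        σ2.foldl (S.dssObsStep QS) ((S.restrict QSᶜ).obsRun (S.dssInit QS) σ1) :=
    fun σ1 σ2 => List.foldl_append ..
  constructor
  · constructor
    · -- (i) → (ii)
      intro hi p hp
      obtain ⟨q, x⟩ := p
      obtain ⟨q0, hq0, s, hrun, hx⟩ := (hreach (q, x)).1 hp
      simp only at hrun hx
      subst hx
      rcases LFSA.run_secret_cases' (QS := QS) hrun with hns | ⟨s1, q1, s2, rfl, hq1, h1, h2⟩
      · exact ⟨q, LFSA.mem_est'.2 ⟨q0, hq0, hns.head_mem', s, hns, rfl⟩⟩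
      · have hp1 : (S.CCObs (S.dssObsStep QS) (S.dssInit QS)).Reachable
            (q1, (S.restrict QSᶜ).obsRun (S.dssInit QS) (S.out s1)) :=
          (hreach _).2 ⟨q0, hq0, s1, h1, rfl⟩
        have h2' := (hi _ hp1 hq1).2 s2 _
          (LFSA.ccobs_run_of' h2 ((S.restrict QSᶜ).obsRun (S.dssInit QS) (S.out s1)))
        show ((S.restrict QSᶜ).obsRun (S.dssInit QS) (S.out (s1 ++ s2))).Nonempty
        rw [LFSA.out_append', hsplit]
        exact h2'
    · -- (ii) → (i)
      intro h p hp _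
      exact ⟨h p hp, fun s p' hr => h p' (LFSA.Reachable.run' hp hr)⟩
  · constructor
    · -- SInfSO → (ii)
      intro hs p hp
      obtain ⟨q, x⟩ := p
      obtain ⟨q0, hq0, s, hrun, hx⟩ := (hreach (q, x)).1 hp
      simp only at hrun hx
      subst hx
      rcases LFSA.run_secret_cases' (QS := QS) hrun with hns | ⟨s1, q1, s2, rfl, hq1, h1, h2⟩
      · exact ⟨q, LFSA.mem_est'.2 ⟨q0, hq0, hns.head_mem', s, hns, rfl⟩⟩
      · obtain ⟨q0', hq0', s1', q1', s2', q2', hr1, hr2, ho1, ho2⟩ :=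
          hs q0 hq0 s1 q1 s2 q h1 h2 hq1
        refine ⟨q2', LFSA.mem_est'.2 ⟨q0', hq0', hr1.head_mem', s1' ++ s2',
          hr1.append' hr2, ?_⟩⟩
        rw [LFSA.out_append', ← ho1, ← ho2, ← LFSA.out_append']
    · -- (ii) → SInfSO
      intro h q0 hq0 s1 q1 s2 q2 h1 h2 _
      have hp : (S.CCObs (S.dssObsStep QS) (S.dssInit QS)).Reachable
          (q2, (S.restrict QSᶜ).obsRun (S.dssInit QS) (S.out (s1 ++ s2))) :=
        (hreach _).2 ⟨q0, hq0, s1 ++ s2, h1.append' h2, rfl⟩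
      obtain ⟨q', hq'⟩ := h _ hp
      obtain ⟨q0', hq0', hq0c, s', hrun, hout⟩ := LFSA.mem_est'.1 hq'
      rw [LFSA.out_append'] at hout
      obtain ⟨u, v, m, rfl, hu, hv, hou, hov⟩ := hrun.split' (S.out s1) (S.out s2) hout
      exact ⟨q0', hq0', u, m, v, q', hu, hv, hou.symm, hov.symm⟩
end
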